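/- Let a, b, c ∈ ℝ^T and τ ∈ (0, 1). Suppose the vectors a − b and b − c are NOT aligned. Then for every δ ∈ ℝ^T with δ ≠ 0, the strict inequality holds: ‖δ + b − a‖₂ + (1/(1−τ))·‖δ‖₂ + ‖c − b + (τ/(1−τ))·δ‖₂ > ‖b − a‖₂ + ‖c − b‖₂. -/

import Mathlib

/-- Two vectors `u₁, u₂ ∈ ℝ^T` are aligned if `⟪u₁, u₂⟫ = ‖u₁‖₂ ‖u₂‖₂`. -/
def Aligned {T : ℕ} (u₁ u₂ : EuclideanSpace ℝ (Fin T)) : Prop :=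
  (inner ℝ u₁ u₂ : ℝ) = ‖u₁‖ * ‖u₂‖

lemma aligned_of_sameRay {T : ℕ} {u v : EuclideanSpace ℝ (Fin T)}
    (h : SameRay ℝ u v) : Aligned u v := by
  have hn : ‖u + v‖ = ‖u‖ + ‖v‖ := h.norm_add
  have hsq : ‖u + v‖ * ‖u + v‖ = ‖u‖ * ‖u‖ + 2 * (inner ℝ u v : ℝ) + ‖v‖ * ‖v‖ :=
    norm_add_mul_self_real u v
  unfold Aligned
  have h2 : (‖u‖ + ‖v‖) * (‖u‖ + ‖v‖) = ‖u‖ * ‖u‖ + 2 * (inner ℝ u v : ℝ) + ‖v‖ * ‖v‖ := by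
    rw [← hn]; exact hsq
  nlinarith [h2]

/-- If `a − b` and `b − c` are not aligned, then for every
`δ ≠ 0` and `τ ∈ (0,1)` the strict inequality holds:
`‖δ + b − a‖ + (1/(1−τ))‖δ‖ + ‖c − b + (τ/(1−τ))δ‖ > ‖b − a‖ + ‖c − b‖`. -/
theorem knot_removal_strict_inequality {T : ℕ} (a b c : EuclideanSpace ℝ (Fin T))
    (τ : ℝ) (hτ : τ ∈ Set.Ioo (0 : ℝ) 1)
    (hna : ¬ Aligned (a - b) (b - c)) :
    ∀ δ : EuclideanSpace ℝ (Fin T), δ ≠ 0 →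
      ‖δ + b - a‖ + (1 / (1 - τ)) * ‖δ‖ + ‖c - b + (τ / (1 - τ)) • δ‖ >
        ‖b - a‖ + ‖c - b‖ := by
  intro δ hδ
  obtain ⟨hτ0, hτ1⟩ := hτ
  have h1τ : (0:ℝ) < 1 - τ := by linarith
  set s : ℝ := τ / (1 - τ) with hs
  have hspos : 0 < s := div_pos hτ0 h1τ
  have hsum : 1 / (1 - τ) = 1 + s := by
    rw [hs]; field_simp; ring
  -- triangle inequalities
  have h1 : ‖b - a‖ ≤ ‖(δ + b - a) + (-δ)‖ := by
    apply le_of_eq; congr 1; abel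
  have h1' : ‖(δ + b - a) + (-δ)‖ ≤ ‖δ + b - a‖ + ‖δ‖ := by
    simpa using norm_add_le (δ + b - a) (-δ)
  have h2 : ‖c - b‖ = ‖(c - b + s • δ) + (-(s • δ))‖ := by
    congr 1; abel
  have h2' : ‖(c - b + s • δ) + (-(s • δ))‖ ≤ ‖c - b + s • δ‖ + s * ‖δ‖ := by
    have := norm_add_le (c - b + s • δ) (-(s • δ))
    simpa [norm_smul, abs_of_pos hspos] using this
  -- strictness: one of the two triangle inequalities must be strict
  by_cases hA : SameRay ℝ (δ + b - a) (-δ)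
  · by_cases hB : SameRay ℝ (c - b + s • δ) (-(s • δ))
    · exfalso
      apply hna
      have hAd : SameRay ℝ δ (-(δ + b - a)) := by
        simpa using hA.neg.symm
      have hBd : SameRay ℝ δ (-(c - b + s • δ)) := by
        have h' : SameRay ℝ (s • δ) (-(c - b + s • δ)) := by simpa using hB.neg.symm
        have hδs : SameRay ℝ δ (s • δ) := SameRay.sameRay_nonneg_smul_right δ hspos.le
        exact hδs.trans h' (fun h => absurd h (smul_ne_zero (ne_of_gt hspos) hδ))
      have hab : SameRay ℝ δ (a - b) := by
        have := hAd.add_right (SameRay.rfl (x := δ))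
        have he : -(δ + b - a) + δ = a - b := by abel
        rwa [he] at this
      have hbc : SameRay ℝ δ (b - c) := by
        have hsδ : SameRay ℝ δ (s • δ) := SameRay.sameRay_nonneg_smul_right δ hspos.le
        have := hBd.add_right hsδ
        have he : -(c - b + s • δ) + s • δ = b - c := by abel
        rwa [he] at this
      exact aligned_of_sameRay (hab.symm.trans hbc (fun h => absurd h hδ))
    · have hlt : ‖(c - b + s • δ) + (-(s • δ))‖ < ‖c - b + s • δ‖ + s * ‖δ‖ := by
        have := norm_add_lt_of_not_sameRay hB
        simpa [norm_smul, abs_of_pos hspos] using this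
      rw [hsum]
      nlinarith [norm_nonneg δ, h1.trans h1', h2, hlt]
  · have hlt : ‖(δ + b - a) + (-δ)‖ < ‖δ + b - a‖ + ‖δ‖ := by
      simpa using norm_add_lt_of_not_sameRay hA
    rw [hsum]
    nlinarith [norm_nonneg δ, h1, hlt, h2.le.trans h2']
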